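/- Let Ũ ⊆ ℝ^r be open, 0 < s₁ < s, let G̃₀ : Ũ → ℝ^{s×s₁} and R : Ũ → ℝ^{s₁×s} be C^∞ maps each of rank s₁ at every point, set G₀(x) = G̃₀(x)R(x), let w : Ũ → ℝ^s be C^∞, and set g₁(x) := G₀(x)w(x). Define μ : Ũ×ℝ^s → ℝ^{s₁} by μ(x,y) = R(x)(y + w(x)) and P : Ũ×ℝ^s → ℝ^{(r+s)×s₁} by P(x,y) = (0; G̃₀(x)) (block column). Then: (i) G₀(x)y + g₁(x) = G̃₀(x)·μ(x,y) for all (x,y), so the vector field h⁽⁰⁾(x,y) = (0; G₀(x)y + g₁(x)) satisfies h⁽⁰⁾ = P·μ; (ii) Dμ(x,y)·P(x,y) = R(x)·G̃₀(x) for all (x,y); (iii) Dμ has rank s₁ at every point, hence the zero set Ẑ = {(x,y) ∈ Ũ×ℝ^s : R(x)(y + w(x)) = 0} is a C^∞ submanifold of ℝ^{r+s} of dimension r + s − s₁. -/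

import Mathlib

open Set Matrix
open Filter Topology Module

/-- `Z` is a `d`-dimensional `C^∞` submanifold (of codimension `k`) of the normed space `E`:
around each of its points there is a `C^∞` diffeomorphism onto an open set of
`ℝ^d × ℝ^k` straightening `Z` to `{(u,w) : w = 0}`. -/
def IsCinftySubmanifold {E : Type*} [NormedAddCommGroup E] [NormedSpace ℝ E]
    (Z : Set E) (d k : ℕ) : Prop :=
  ∀ z ∈ Z, ∃ (Ω : Set E) (φ : E → (Fin d → ℝ) × (Fin k → ℝ))
      (ψ : (Fin d → ℝ) × (Fin k → ℝ) → E),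
    IsOpen Ω ∧ z ∈ Ω ∧ ContDiffOn ℝ (⊤ : ℕ∞) φ Ω ∧ IsOpen (φ '' Ω) ∧
    ContDiffOn ℝ (⊤ : ℕ∞) ψ (φ '' Ω) ∧ (∀ p ∈ Ω, ψ (φ p) = p) ∧
    (∀ q ∈ φ '' Ω, φ (ψ q) = q) ∧ ∀ p ∈ Ω, (p ∈ Z ↔ (φ p).2 = 0)

/-- The Jacobian of `μ : ℝ^r × ℝ^s → ℝ^{s₁}` at `p`, as an `s₁ × (r ⊕ s)` matrix. -/
noncomputable def jacobianProd (r s s₁ : ℕ)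
    (μ : (Fin r → ℝ) × (Fin s → ℝ) → Fin s₁ → ℝ)
    (p : (Fin r → ℝ) × (Fin s → ℝ)) : Matrix (Fin s₁) (Fin r ⊕ Fin s) ℝ :=
  Matrix.of fun k d =>
    fderiv ℝ (fun q => μ q k) p
      (Sum.elim (fun i => (Pi.single i 1, 0)) (fun j => (0, Pi.single j 1)) d)

/-- Product decomposition for the nonstandard reduction: with
`G₀ = G̃₀R`, `g₁ = G₀w`, `μ(x,y) = R(x)(y+w(x))` and `P = (0; G̃₀)`, one has
(i) `G₀(x)y + g₁(x) = G̃₀(x)μ(x,y)`, i.e. `h⁽⁰⁾ = P·μ`; (ii) `Dμ·P = R·G̃₀`;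
(iii) `Dμ` has rank `s₁` everywhere, hence `Ẑ = {(x,y) : x ∈ Ũ, R(x)(y+w(x)) = 0}` is a
`C^∞` submanifold of dimension `r + s − s₁`. -/

lemma aux_mu_smooth {r s s₁ : ℕ} {Ut : Set (Fin r → ℝ)}
    (R : (Fin r → ℝ) → Matrix (Fin s₁) (Fin s) ℝ)
    (w : (Fin r → ℝ) → Fin s → ℝ)
    (hR : ContDiffOn ℝ (⊤ : ℕ∞) (fun x i j => R x i j) Ut)
    (hw : ContDiffOn ℝ (⊤ : ℕ∞) w Ut) :
    ContDiffOn ℝ (⊤ : ℕ∞)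
      (fun p : (Fin r → ℝ) × (Fin s → ℝ) => (R p.1).mulVec (p.2 + w p.1))
      (Ut ×ˢ (univ : Set (Fin s → ℝ))) := by
  have hfst : ContDiffOn ℝ (⊤ : ℕ∞) (fun p : (Fin r → ℝ) × (Fin s → ℝ) => p.1)
      (Ut ×ˢ (univ : Set (Fin s → ℝ))) := contDiff_fst.contDiffOn
  have hmaps : MapsTo (fun p : (Fin r → ℝ) × (Fin s → ℝ) => p.1)
      (Ut ×ˢ (univ : Set (Fin s → ℝ))) Ut := fun p hp => hp.1
  have hR' : ContDiffOn ℝ (⊤ : ℕ∞) (fun p : (Fin r → ℝ) × (Fin s → ℝ) => fun i j => R p.1 i j)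
      (Ut ×ˢ (univ : Set (Fin s → ℝ))) := hR.comp hfst hmaps
  have hw' : ContDiffOn ℝ (⊤ : ℕ∞) (fun p : (Fin r → ℝ) × (Fin s → ℝ) => w p.1)
      (Ut ×ˢ (univ : Set (Fin s → ℝ))) := hw.comp hfst hmaps
  rw [contDiffOn_pi]
  intro k
  have heq : (fun p : (Fin r → ℝ) × (Fin s → ℝ) => (R p.1).mulVec (p.2 + w p.1) k)
      = fun p => ∑ j, R p.1 k j * (p.2 j + w p.1 j) := by
    funext p; simp [Matrix.mulVec, dotProduct]
  rw [heq]
  apply ContDiffOn.sum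
  intro j _
  have h1 : ContDiffOn ℝ (⊤ : ℕ∞) (fun p : (Fin r → ℝ) × (Fin s → ℝ) => R p.1 k j)
      (Ut ×ˢ (univ : Set (Fin s → ℝ))) := (contDiffOn_pi.1 (contDiffOn_pi.1 hR' k)) j
  have h2 : ContDiffOn ℝ (⊤ : ℕ∞) (fun p : (Fin r → ℝ) × (Fin s → ℝ) => p.2 j + w p.1 j)
      (Ut ×ˢ (univ : Set (Fin s → ℝ))) :=
    ((contDiffOn_pi.1 contDiff_snd.contDiffOn) j).add ((contDiffOn_pi.1 hw') j)
  exact h1.mul h2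


lemma aux_fderiv_snd {r s s₁ : ℕ} {Ut : Set (Fin r → ℝ)} (hUt : IsOpen Ut)
    (R : (Fin r → ℝ) → Matrix (Fin s₁) (Fin s) ℝ)
    (w : (Fin r → ℝ) → Fin s → ℝ)
    (hμ : ContDiffOn ℝ (⊤ : ℕ∞)
      (fun p : (Fin r → ℝ) × (Fin s → ℝ) => (R p.1).mulVec (p.2 + w p.1))
      (Ut ×ˢ (univ : Set (Fin s → ℝ))))
    {x : Fin r → ℝ} (hx : x ∈ Ut) (y : Fin s → ℝ) (v : Fin s → ℝ) :
    fderiv ℝ (fun p : (Fin r → ℝ) × (Fin s → ℝ) => (R p.1).mulVec (p.2 + w p.1)) (x, y) (0, v)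
      = (R x).mulVec v := by
  set μ : (Fin r → ℝ) × (Fin s → ℝ) → Fin s₁ → ℝ :=
    fun p => (R p.1).mulVec (p.2 + w p.1) with hμdef
  have hnhds : (Ut ×ˢ (univ : Set (Fin s → ℝ))) ∈ 𝓝 ((x, y) : (Fin r → ℝ) × (Fin s → ℝ)) :=
    (hUt.prod isOpen_univ).mem_nhds ⟨hx, mem_univ _⟩
  have hdiff : DifferentiableAt ℝ μ (x, y) :=
    (hμ.contDiffAt hnhds).differentiableAt (by simp)
  have hμz : HasFDerivAt μ (fderiv ℝ μ (x, y)) (x, y) := hdiff.hasFDerivAt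
  have hincl : HasFDerivAt (fun y' : Fin s → ℝ => ((x, y') : (Fin r → ℝ) × (Fin s → ℝ)))
      ((0 : (Fin s → ℝ) →L[ℝ] (Fin r → ℝ)).prod (ContinuousLinearMap.id ℝ (Fin s → ℝ))) y :=
    HasFDerivAt.prodMk (hasFDerivAt_const x y) (hasFDerivAt_id y)
  have hcomp : HasFDerivAt (fun y' => μ (x, y'))
      ((fderiv ℝ μ (x, y)).comp
        ((0 : (Fin s → ℝ) →L[ℝ] (Fin r → ℝ)).prod (ContinuousLinearMap.id ℝ (Fin s → ℝ)))) y :=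
    hμz.comp y hincl
  set M : (Fin s → ℝ) →L[ℝ] (Fin s₁ → ℝ) :=
    LinearMap.toContinuousLinearMap (Matrix.mulVecLin (R x)) with hMdef
  have htrans : HasFDerivAt (fun y' : Fin s → ℝ => y' + w x)
      (ContinuousLinearMap.id ℝ (Fin s → ℝ)) y := (hasFDerivAt_id y).add_const (w x)
  have hg : HasFDerivAt (fun y' : Fin s → ℝ => μ (x, y')) M y := by
    have h1 : HasFDerivAt (fun y' : Fin s → ℝ => M (y' + w x))
        (M.comp (ContinuousLinearMap.id ℝ (Fin s → ℝ))) y :=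
      (M.hasFDerivAt).comp y htrans
    rw [ContinuousLinearMap.comp_id] at h1
    exact h1
  have huniq := hcomp.unique hg
  have := congrArg (fun (L : (Fin s → ℝ) →L[ℝ] (Fin s₁ → ℝ)) => L v) huniq
  simpa [hMdef] using this

lemma aux_jacobian_inr {r s s₁ : ℕ} {Ut : Set (Fin r → ℝ)} (hUt : IsOpen Ut)
    (R : (Fin r → ℝ) → Matrix (Fin s₁) (Fin s) ℝ)
    (w : (Fin r → ℝ) → Fin s → ℝ)
    (hμ : ContDiffOn ℝ (⊤ : ℕ∞)
      (fun p : (Fin r → ℝ) × (Fin s → ℝ) => (R p.1).mulVec (p.2 + w p.1))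
      (Ut ×ˢ (univ : Set (Fin s → ℝ))))
    (hkey : ∀ x ∈ Ut, ∀ (y v : Fin s → ℝ),
      fderiv ℝ (fun p : (Fin r → ℝ) × (Fin s → ℝ) => (R p.1).mulVec (p.2 + w p.1)) (x, y) (0, v)
        = (R x).mulVec v)
    {x : Fin r → ℝ} (hx : x ∈ Ut) (y : Fin s → ℝ) (k : Fin s₁) (j : Fin s) :
    jacobianProd r s s₁ (fun p => (R p.1).mulVec (p.2 + w p.1)) (x, y) k (Sum.inr j)
      = R x k j := by
  set μ : (Fin r → ℝ) × (Fin s → ℝ) → Fin s₁ → ℝ :=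
    fun p => (R p.1).mulVec (p.2 + w p.1) with hμdef
  have hnhds : (Ut ×ˢ (univ : Set (Fin s → ℝ))) ∈ 𝓝 ((x, y) : (Fin r → ℝ) × (Fin s → ℝ)) :=
    (hUt.prod isOpen_univ).mem_nhds ⟨hx, mem_univ _⟩
  have hdiff : DifferentiableAt ℝ μ (x, y) :=
    (hμ.contDiffAt hnhds).differentiableAt (by simp)
  have hμz : HasFDerivAt μ (fderiv ℝ μ (x, y)) (x, y) := hdiff.hasFDerivAt
  have hk : HasFDerivAt (fun q => μ q k)
      ((ContinuousLinearMap.proj k).comp (fderiv ℝ μ (x, y))) (x, y) :=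
    (ContinuousLinearMap.proj (R := ℝ) (φ := fun _ : Fin s₁ => ℝ) k).hasFDerivAt.comp (x, y) hμz
  have : jacobianProd r s s₁ μ (x, y) k (Sum.inr j)
      = fderiv ℝ (fun q => μ q k) (x, y) (0, Pi.single j 1) := rfl
  rw [this, hk.fderiv]
  have := hkey x hx y (Pi.single j 1)
  simp only [ContinuousLinearMap.coe_comp', Function.comp_apply]
  rw [this]
  simp [Matrix.mulVec_single]

lemma aux_submanifold {r s s₁ : ℕ} (hs₁s : s₁ < s)
    {Ut : Set (Fin r → ℝ)} (hUt : IsOpen Ut)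
    (R : (Fin r → ℝ) → Matrix (Fin s₁) (Fin s) ℝ)
    (w : (Fin r → ℝ) → Fin s → ℝ)
    (hμ : ContDiffOn ℝ (⊤ : ℕ∞)
      (fun p : (Fin r → ℝ) × (Fin s → ℝ) => (R p.1).mulVec (p.2 + w p.1))
      (Ut ×ˢ (univ : Set (Fin s → ℝ))))
    (hkey : ∀ x ∈ Ut, ∀ (y v : Fin s → ℝ),
      fderiv ℝ (fun p : (Fin r → ℝ) × (Fin s → ℝ) => (R p.1).mulVec (p.2 + w p.1)) (x, y) (0, v)
        = (R x).mulVec v)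
    (hrkR : ∀ x ∈ Ut, (R x).rank = s₁) :
    IsCinftySubmanifold
      {p : (Fin r → ℝ) × (Fin s → ℝ) | p.1 ∈ Ut ∧ (R p.1).mulVec (p.2 + w p.1) = 0}
      (r + s - s₁) s₁ := by
  rintro ⟨x₀, y₀⟩ ⟨hx₀, hzero⟩
  set μ : (Fin r → ℝ) × (Fin s → ℝ) → Fin s₁ → ℝ :=
    fun p => (R p.1).mulVec (p.2 + w p.1) with hμdef
  set U' := Ut ×ˢ (univ : Set (Fin s → ℝ)) with hU'def
  have hU'open : IsOpen U' := hUt.prod isOpen_univ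
  have hzU' : ((x₀, y₀) : (Fin r → ℝ) × (Fin s → ℝ)) ∈ U' := ⟨hx₀, mem_univ _⟩
  -- kernel decomposition at x₀
  set M₀ := Matrix.mulVecLin (R x₀) with hM₀
  have hfinK : finrank ℝ (LinearMap.ker M₀) = s - s₁ := by
    have h1 := LinearMap.finrank_range_add_finrank_ker M₀
    have h2 : finrank ℝ (LinearMap.range M₀) = s₁ := hrkR x₀ hx₀
    rw [h2, Module.finrank_fintype_fun_eq_card, Fintype.card_fin] at h1
    omega
  obtain ⟨K', hK'⟩ := Submodule.exists_isCompl (LinearMap.ker M₀)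
  set π := (LinearMap.ker M₀).linearProjOfIsCompl K' hK' with hπdef
  set b : Basis (Fin (s - s₁)) ℝ (LinearMap.ker M₀) :=
    Module.finBasisOfFinrankEq ℝ _ hfinK with hbdef
  set B : (Fin s → ℝ) →ₗ[ℝ] (Fin (s - s₁) → ℝ) := b.equivFun.toLinearMap ∘ₗ π with hBdef
  set e : Fin (r + s - s₁) ≃ (Fin r ⊕ Fin (s - s₁)) :=
    (finCongr (by omega)).trans finSumFinEquiv.symm with hedef
  set glue : ((Fin r → ℝ) × (Fin (s - s₁) → ℝ)) ≃ₗ[ℝ] (Fin (r + s - s₁) → ℝ) :=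
    (LinearEquiv.sumArrowLequivProdArrow (Fin r) (Fin (s - s₁)) ℝ ℝ).symm.trans
      (LinearEquiv.funCongrLeft ℝ ℝ e) with hgluedef
  set T₁ : ((Fin r → ℝ) × (Fin s → ℝ)) →L[ℝ] (Fin (r + s - s₁) → ℝ) :=
    LinearMap.toContinuousLinearMap
      (glue.toLinearMap ∘ₗ (LinearMap.prodMap LinearMap.id B)) with hT₁def
  set φ : ((Fin r → ℝ) × (Fin s → ℝ)) → (Fin (r + s - s₁) → ℝ) × (Fin s₁ → ℝ) :=
    fun p => (T₁ p, μ p) with hφdef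
  have hφU' : ContDiffOn ℝ (⊤ : ℕ∞) φ U' := (T₁.contDiff.contDiffOn).prodMk hμ
  have hdiffμ : ∀ p ∈ U', HasFDerivAt μ (fderiv ℝ μ p) p := fun p hp =>
    ((hμ.contDiffAt (hU'open.mem_nhds hp)).differentiableAt
      (by simp)).hasFDerivAt
  have hDφ : ∀ p ∈ U', HasFDerivAt φ (T₁.prod (fderiv ℝ μ p)) p := fun p hp =>
    T₁.hasFDerivAt.prodMk (hdiffμ p hp)
  set L := T₁.prod (fderiv ℝ μ (x₀, y₀)) with hLdef
  -- injectivity of the derivative at the base point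
  have hinj : Function.Injective L := by
    have h0 : ∀ q : (Fin r → ℝ) × (Fin s → ℝ), L q = 0 → q = 0 := by
      rintro ⟨u, v⟩ hq
      have hq' : (T₁ (u, v), fderiv ℝ μ (x₀, y₀) (u, v))
          = (0 : (Fin (r + s - s₁) → ℝ) × (Fin s₁ → ℝ)) := hq
      obtain ⟨h1, h2⟩ := Prod.mk_eq_zero.mp hq'
      have h1' : glue (u, B v) = 0 := h1
      have h1'' : (u, B v) = (0 : (Fin r → ℝ) × (Fin (s - s₁) → ℝ)) :=
        glue.injective (by simpa using h1')
      obtain ⟨hu, hBv⟩ := Prod.mk_eq_zero.mp h1''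
      have hπv : π v = 0 := by
        have : b.equivFun (π v) = 0 := hBv
        simpa using b.equivFun.map_eq_zero_iff.1 this
      have h2' : fderiv ℝ μ (x₀, y₀) ((0 : Fin r → ℝ), v) = 0 := by
        rw [← hu]; exact h2
      have hv : (R x₀).mulVec v = 0 := by rw [← hkey x₀ hx₀ y₀ v]; exact h2'
      have hvK : v ∈ LinearMap.ker M₀ := hv
      have hπv' : π v = ⟨v, hvK⟩ :=
        Submodule.linearProjOfIsCompl_apply_left hK' ⟨v, hvK⟩
      have hv0 : v = 0 := by
        have := hπv'.symm.trans hπv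
        exact congrArg Subtype.val this
      exact Prod.mk_eq_zero.mpr ⟨hu, hv0⟩
    intro a c hac
    have : a - c = 0 := h0 _ (by rw [map_sub, hac, sub_self])
    exact sub_eq_zero.1 this
  have hdimE : finrank ℝ ((Fin r → ℝ) × (Fin s → ℝ))
      = finrank ℝ ((Fin (r + s - s₁) → ℝ) × (Fin s₁ → ℝ)) := by
    simp [Module.finrank_prod, Module.finrank_fintype_fun_eq_card]
    omega
  have hbij : Function.Bijective L := by
    refine ⟨hinj, ?_⟩
    exact (LinearMap.injective_iff_surjective_of_finrank_eq_finrank (f := (L : _ →ₗ[ℝ] _))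
      hdimE).1 hinj
  set eL := (LinearEquiv.ofBijective (L : _ →ₗ[ℝ] _) (by exact hbij)).toContinuousLinearEquiv with heLdef
  have hcoe : (eL : ((Fin r → ℝ) × (Fin s → ℝ)) →L[ℝ]
      ((Fin (r + s - s₁) → ℝ) × (Fin s₁ → ℝ))) = L := by
    ext q <;> rfl
  have hφat : ContDiffAt ℝ (⊤ : ℕ∞) φ (x₀, y₀) := hφU'.contDiffAt (hU'open.mem_nhds hzU')
  have hL' : HasFDerivAt φ (eL : ((Fin r → ℝ) × (Fin s → ℝ)) →L[ℝ]
      ((Fin (r + s - s₁) → ℝ) × (Fin s₁ → ℝ))) (x₀, y₀) := by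
    rw [hcoe]; exact hDφ _ hzU'
  have hn1 : ((⊤ : ℕ∞) : WithTop ℕ∞) ≠ 0 := by simp
  set Φ := hφat.toOpenPartialHomeomorph φ hL' hn1 with hΦdef
  have hΦcoe : ⇑Φ = φ := rfl
  set S := U' ∩ (fderiv ℝ φ) ⁻¹'
    (range ((↑) : (((Fin r → ℝ) × (Fin s → ℝ)) ≃L[ℝ]
      ((Fin (r + s - s₁) → ℝ) × (Fin s₁ → ℝ))) →
      (((Fin r → ℝ) × (Fin s → ℝ)) →L[ℝ] ((Fin (r + s - s₁) → ℝ) × (Fin s₁ → ℝ))))) with hSdef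
  have hSopen : IsOpen S :=
    ContinuousOn.isOpen_inter_preimage
      (hφU'.continuousOn_fderiv_of_isOpen hU'open (by exact_mod_cast le_top)) hU'open
      ContinuousLinearEquiv.isOpen
  have hzS : ((x₀, y₀) : (Fin r → ℝ) × (Fin s → ℝ)) ∈ S :=
    ⟨hzU', ⟨eL, hcoe.trans (hDφ _ hzU').fderiv.symm⟩⟩
  set Ω := Φ.source ∩ S with hΩdef
  have hΩopen : IsOpen Ω := Φ.open_source.inter hSopen
  have hΩsub : Ω ⊆ Φ.source := inter_subset_left
  have hzΩ : ((x₀, y₀) : (Fin r → ℝ) × (Fin s → ℝ)) ∈ Ω :=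
    ⟨hφat.mem_toOpenPartialHomeomorph_source hL' hn1, hzS⟩
  have himg : φ '' Ω = Φ.target ∩ Φ.symm ⁻¹' Ω := by
    rw [← hΦcoe]; exact Φ.image_eq_target_inter_inv_preimage hΩsub
  refine ⟨Ω, φ, Φ.symm, hΩopen, hzΩ, hφU'.mono fun p hp => hp.2.1, ?_, ?_, ?_, ?_, ?_⟩
  · rw [himg]
    exact ContinuousOn.isOpen_inter_preimage Φ.continuousOn_symm Φ.open_target hΩopen
  · -- smoothness of the inverse on the image
    rintro q ⟨p, hpΩ, rfl⟩
    have hpsrc : p ∈ Φ.source := hpΩ.1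
    have hpS : p ∈ S := hpΩ.2
    have hpU' : p ∈ U' := hpS.1
    obtain ⟨ep, hep⟩ := hpS.2
    have hsymmq : Φ.symm (φ p) = p := Φ.left_inv hpsrc
    have hdiffp : HasFDerivAt φ (fderiv ℝ φ p) p :=
      ((hDφ p hpU').differentiableAt).hasFDerivAt
    have hder : HasFDerivAt φ (ep : ((Fin r → ℝ) × (Fin s → ℝ)) →L[ℝ]
        ((Fin (r + s - s₁) → ℝ) × (Fin s₁ → ℝ))) p := by
      rw [hep]; exact hdiffp
    have hφatp : ContDiffAt ℝ (⊤ : ℕ∞) φ p := hφU'.contDiffAt (hU'open.mem_nhds hpU')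
    have hsymm : ContDiffAt ℝ (⊤ : ℕ∞) (Φ.symm) (φ p) := by
      refine Φ.contDiffAt_symm (f₀' := ep) (Φ.map_source hpsrc) ?_ ?_
      · rw [hΦcoe, hsymmq]; exact hder
      · rw [hΦcoe, hsymmq]; exact hφatp
    exact hsymm.contDiffWithinAt
  · intro p hp
    exact Φ.left_inv (hΩsub hp)
  · rintro q ⟨p, hpΩ, rfl⟩
    have : Φ.symm (φ p) = p := Φ.left_inv (hΩsub hpΩ)
    rw [this]
  · intro p hpΩ
    have hpUt : p.1 ∈ Ut := hpΩ.2.1.1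
    constructor
    · intro hpZ; exact hpZ.2
    · intro h0; exact ⟨hpUt, h0⟩


theorem stmt5 (r s s₁ : ℕ) (hs₁0 : 0 < s₁) (hs₁s : s₁ < s)
    (Ut : Set (Fin r → ℝ)) (hUt : IsOpen Ut)
    (Gt : (Fin r → ℝ) → Matrix (Fin s) (Fin s₁) ℝ)
    (R : (Fin r → ℝ) → Matrix (Fin s₁) (Fin s) ℝ)
    (w : (Fin r → ℝ) → Fin s → ℝ)
    (hGt : ContDiffOn ℝ (⊤ : ℕ∞) (fun x i j => Gt x i j) Ut)
    (hR : ContDiffOn ℝ (⊤ : ℕ∞) (fun x i j => R x i j) Ut)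
    (hw : ContDiffOn ℝ (⊤ : ℕ∞) w Ut)
    (hrkGt : ∀ x ∈ Ut, (Gt x).rank = s₁)
    (hrkR : ∀ x ∈ Ut, (R x).rank = s₁) :
    let G₀ : (Fin r → ℝ) → Matrix (Fin s) (Fin s) ℝ := fun x => Gt x * R x
    let g₁ : (Fin r → ℝ) → Fin s → ℝ := fun x => (G₀ x).mulVec (w x)
    let μ : (Fin r → ℝ) × (Fin s → ℝ) → Fin s₁ → ℝ :=
      fun p => (R p.1).mulVec (p.2 + w p.1)
    let P : (Fin r → ℝ) × (Fin s → ℝ) → Matrix (Fin r ⊕ Fin s) (Fin s₁) ℝ :=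
      fun p => Matrix.fromRows 0 (Gt p.1)
    (∀ x ∈ Ut, ∀ y : Fin s → ℝ,
      (G₀ x).mulVec y + g₁ x = (Gt x).mulVec (μ (x, y)) ∧
      (Sum.elim (0 : Fin r → ℝ) ((G₀ x).mulVec y + g₁ x) =
        (P (x, y)).mulVec (μ (x, y)))) ∧
    (∀ x ∈ Ut, ∀ y : Fin s → ℝ,
      jacobianProd r s s₁ μ (x, y) * P (x, y) = R x * Gt x) ∧
    (∀ x ∈ Ut, ∀ y : Fin s → ℝ, (jacobianProd r s s₁ μ (x, y)).rank = s₁) ∧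
    IsCinftySubmanifold
      {p : (Fin r → ℝ) × (Fin s → ℝ) | p.1 ∈ Ut ∧ (R p.1).mulVec (p.2 + w p.1) = 0}
      (r + s - s₁) s₁ := by
  intro G₀ g₁ μ P
  have hμs : ContDiffOn ℝ (⊤ : ℕ∞) μ (Ut ×ˢ (univ : Set (Fin s → ℝ))) :=
    aux_mu_smooth R w hR hw
  have hkey : ∀ x ∈ Ut, ∀ (y v : Fin s → ℝ),
      fderiv ℝ μ (x, y) (0, v) = (R x).mulVec v :=
    fun x hx y v => aux_fderiv_snd hUt R w hμs hx y v
  have hjac : ∀ x ∈ Ut, ∀ (y : Fin s → ℝ) (k : Fin s₁) (j : Fin s),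
      jacobianProd r s s₁ μ (x, y) k (Sum.inr j) = R x k j :=
    fun x hx y k j => aux_jacobian_inr hUt R w hμs hkey hx y k j
  have hi : ∀ x ∈ Ut, ∀ y : Fin s → ℝ,
      (G₀ x).mulVec y + g₁ x = (Gt x).mulVec (μ (x, y)) := by
    intro x hx y
    show (Gt x * R x).mulVec y + (Gt x * R x).mulVec (w x)
      = (Gt x).mulVec ((R x).mulVec (y + w x))
    simp [Matrix.mulVec_add, ← Matrix.mulVec_mulVec]
  refine ⟨?_, ?_, ?_, ?_⟩
  · intro x hx y
    refine ⟨hi x hx y, ?_⟩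
    show Sum.elim (0 : Fin r → ℝ) ((G₀ x).mulVec y + g₁ x)
      = (Matrix.fromRows (0 : Matrix (Fin r) (Fin s₁) ℝ) (Gt x)).mulVec (μ (x, y))
    rw [Matrix.fromRows_mulVec, Matrix.zero_mulVec, hi x hx y]
  · intro x hx y
    ext k c
    rw [Matrix.mul_apply, Fintype.sum_sum_type]
    have h1 : ∀ i : Fin r,
        jacobianProd r s s₁ μ (x, y) k (Sum.inl i) * P (x, y) (Sum.inl i) c = 0 := by
      intro i
      have hP0 : P (x, y) (Sum.inl i) c = 0 := by
        show Matrix.fromRows (0 : Matrix (Fin r) (Fin s₁) ℝ) (Gt x) (Sum.inl i) c = 0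
        simp
      rw [hP0, mul_zero]
    have h2 : ∀ j : Fin s,
        jacobianProd r s s₁ μ (x, y) k (Sum.inr j) * P (x, y) (Sum.inr j) c
          = R x k j * Gt x j c := by
      intro j
      have hPj : P (x, y) (Sum.inr j) c = Gt x j c := by
        show Matrix.fromRows (0 : Matrix (Fin r) (Fin s₁) ℝ) (Gt x) (Sum.inr j) c = Gt x j c
        simp
      rw [hPj, hjac x hx y k j]
    rw [Finset.sum_congr rfl fun i _ => h1 i, Finset.sum_congr rfl fun j _ => h2 j,
      Matrix.mul_apply]
    simp
  · intro x hx y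
    have hle : (R x).rank ≤ (jacobianProd r s s₁ μ (x, y)).rank := by
      rw [Matrix.rank, Matrix.rank]
      apply Submodule.finrank_mono
      rintro u ⟨v, rfl⟩
      refine ⟨Sum.elim 0 v, ?_⟩
      ext k
      simp only [Matrix.mulVecLin_apply, Matrix.mulVec, dotProduct, Fintype.sum_sum_type,
        Sum.elim_inl, Sum.elim_inr, mul_zero, Finset.sum_const_zero, zero_add]
      simp [hjac x hx y]
    have hub : (jacobianProd r s s₁ μ (x, y)).rank ≤ s₁ :=
      (Matrix.rank_le_card_height _).trans (by simp)
    have hx1 := hrkR x hx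
    omega
  · exact aux_submanifold hs₁s hUt R w hμs hkey hrkR
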